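/- For probability distributions P, Q on a finite set with P(x), Q(x) > 0, the Kullback–Leibler divergence satisfies D(P‖Q) ≥ (1/2)·Σ_x (Q(x)−P(x))²/max(P(x),Q(x)) ≥ 0; in particular D(P‖Q) ≥ 0 with equality iff P = Q. -/

import Mathlib

open Finset

lemma aux1 (t : ℝ) (ht : 0 < t) (ht1 : t ≤ 1) :
    (1 - t) ^ 2 / 2 ≤ -Real.log t + t - 1 := by
  set f : ℝ → ℝ := fun x => -Real.log x + x - 1 - (1 - x) ^ 2 / 2 with hf
  have hderiv : ∀ x ∈ Set.Ioo t 1, HasDerivAt f (2 - x - x⁻¹) x := by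
    intro x hx
    have hx0 : x ≠ 0 := by nlinarith [hx.1]
    have h1 : HasDerivAt (fun x : ℝ => -Real.log x + x - 1) (-(x⁻¹) + 1) x := by
      simpa using (((Real.hasDerivAt_log hx0).neg).add (hasDerivAt_id x)).sub_const 1
    have h2 : HasDerivAt (fun x : ℝ => (1 - x) ^ 2 / 2) (x - 1) x := by
      have h : HasDerivAt (fun x : ℝ => 1 - x) (-1) x := by
        simpa using (hasDerivAt_id x).const_sub 1
      have := (h.pow 2).div_const 2
      refine this.congr_deriv ?_
      push_cast
      ring
    have := h1.sub h2
    refine this.congr_deriv ?_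
    ring
  have hanti : AntitoneOn f (Set.Icc t 1) := by
    apply antitoneOn_of_deriv_nonpos (convex_Icc t 1)
    · apply ContinuousOn.sub
      apply ContinuousOn.sub
      apply ContinuousOn.add
      · exact (Real.continuousOn_log.mono (by intro x hx; simp; nlinarith [hx.1])).neg
      · exact continuousOn_id
      · exact continuousOn_const
      · exact (continuousOn_const.sub continuousOn_id).pow 2 |>.div_const 2
    · intro x hx
      rw [interior_Icc] at hx
      exact ((hderiv x hx).differentiableAt).differentiableWithinAt
    · intro x hx
      rw [interior_Icc] at hx
      rw [(hderiv x hx).deriv]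
      have hx0 : 0 < x := lt_trans ht hx.1
      have : x⁻¹ ≥ 2 - x := by
        rw [ge_iff_le, ← sub_nonneg]
        have : x⁻¹ - (2 - x) = (x - 1) ^ 2 / x := by field_simp; ring
        rw [this]; positivity
      linarith
  have h := hanti (Set.mem_Icc.2 ⟨le_refl t, ht1⟩) (Set.mem_Icc.2 ⟨ht1, le_refl 1⟩) ht1
  simp only [hf, Real.log_one] at h
  nlinarith [h]

lemma aux2 (s : ℝ) (hs : 0 < s) (hs1 : s ≤ 1) :
    (1 - s) ^ 2 / 2 ≤ s * Real.log s + 1 - s := by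
  set f : ℝ → ℝ := fun x => x * Real.log x + 1 - x - (1 - x) ^ 2 / 2 with hf
  have hderiv : ∀ x ∈ Set.Ioo s 1, HasDerivAt f (Real.log x + 1 - x) x := by
    intro x hx
    have hx0 : x ≠ 0 := by nlinarith [hx.1]
    have h1 : HasDerivAt (fun x : ℝ => x * Real.log x + 1 - x) (Real.log x + 1 - 1) x := by
      exact (((Real.hasDerivAt_mul_log hx0).add_const 1).sub (hasDerivAt_id' x)).congr_deriv (by ring)
    have h2 : HasDerivAt (fun x : ℝ => (1 - x) ^ 2 / 2) (x - 1) x := by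
      have h : HasDerivAt (fun x : ℝ => 1 - x) (-1) x := by
        simpa using (hasDerivAt_id x).const_sub 1
      have := (h.pow 2).div_const 2
      refine this.congr_deriv ?_
      push_cast
      ring
    have := h1.sub h2
    refine this.congr_deriv ?_
    ring
  have hanti : AntitoneOn f (Set.Icc s 1) := by
    apply antitoneOn_of_deriv_nonpos (convex_Icc s 1)
    · apply ContinuousOn.sub
      apply ContinuousOn.sub
      apply ContinuousOn.add
      · exact continuousOn_id.mul (Real.continuousOn_log.mono (by intro x hx; simp; nlinarith [hx.1]))
      · exact continuousOn_const
      · exact continuousOn_id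
      · exact (continuousOn_const.sub continuousOn_id).pow 2 |>.div_const 2
    · intro x hx
      rw [interior_Icc] at hx
      exact ((hderiv x hx).differentiableAt).differentiableWithinAt
    · intro x hx
      rw [interior_Icc] at hx
      rw [(hderiv x hx).deriv]
      have hx0 : 0 < x := lt_trans hs hx.1
      have hlog : Real.log x ≤ x - 1 := Real.log_le_sub_one_of_pos hx0
      linarith
  have h := hanti (Set.mem_Icc.2 ⟨le_refl s, hs1⟩) (Set.mem_Icc.2 ⟨hs1, le_refl 1⟩) hs1
  simp only [hf, Real.log_one] at h
  nlinarith [h]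

lemma pointwise (p q : ℝ) (hp : 0 < p) (hq : 0 < q) :
    (q - p) ^ 2 / max p q / 2 ≤ p * Real.log (p / q) + q - p := by
  rcases le_total q p with h | h
  · rw [max_eq_left h]
    have ht : 0 < q / p := div_pos hq hp
    have ht1 : q / p ≤ 1 := (div_le_one hp).2 h
    have := aux1 (q / p) ht ht1
    have hlog : Real.log (p / q) = -Real.log (q / p) := by
      rw [← Real.log_inv]; congr 1; field_simp
    have hsq : (1 - q / p) ^ 2 = (q - p) ^ 2 / p ^ 2 := by
      field_simp; ring
    rw [hsq] at this
    have hp2 : (0:ℝ) < p ^ 2 := by positivity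
    -- multiply by p
    have h2 : p * ((q - p) ^ 2 / p ^ 2 / 2) ≤ p * (-Real.log (q/p) + q / p - 1) :=
      mul_le_mul_of_nonneg_left this hp.le
    have e1 : p * ((q - p) ^ 2 / p ^ 2 / 2) = (q - p) ^ 2 / p / 2 := by
      field_simp
    have e2 : p * (-Real.log (q/p) + q / p - 1) = p * (-Real.log (q/p)) + q - p := by
      field_simp
    rw [e1, e2] at h2
    rw [hlog]; linarith
  · rw [max_eq_right h]
    have hs : 0 < p / q := div_pos hp hq
    have hs1 : p / q ≤ 1 := (div_le_one hq).2 h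
    have := aux2 (p / q) hs hs1
    have hsq : (1 - p / q) ^ 2 = (q - p) ^ 2 / q ^ 2 := by
      field_simp
    rw [hsq] at this
    have h2 : q * ((q - p) ^ 2 / q ^ 2 / 2) ≤ q * (p / q * Real.log (p / q) + 1 - p / q) := by
      exact mul_le_mul_of_nonneg_left this hq.le
    have e1 : q * ((q - p) ^ 2 / q ^ 2 / 2) = (q - p) ^ 2 / q / 2 := by
      field_simp
    have e2 : q * (p / q * Real.log (p / q) + 1 - p / q) = p * Real.log (p / q) + q - p := by
      field_simp
    rw [e1, e2] at h2
    exact h2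

/-- For positive probability distributions `P, Q` on a finite set, the KL
divergence satisfies
`D(P‖Q) ≥ (1/2)·Σ_x (Q(x)−P(x))²/max(P(x),Q(x)) ≥ 0`; in particular
`D(P‖Q) ≥ 0` with equality iff `P = Q`. -/
theorem kl_lower_bound_quadratic
    (𝒳 : Type*) [Fintype 𝒳]
    (P Q : 𝒳 → ℝ)
    (hP : ∀ x, 0 < P x) (hPsum : ∑ x, P x = 1)
    (hQ : ∀ x, 0 < Q x) (hQsum : ∑ x, Q x = 1) :
    ((1 : ℝ) / 2) * ∑ x, (Q x - P x) ^ 2 / max (P x) (Q x) ≤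
      ∑ x, P x * Real.log (P x / Q x) ∧
    0 ≤ ((1 : ℝ) / 2) * ∑ x, (Q x - P x) ^ 2 / max (P x) (Q x) ∧
    (0 ≤ ∑ x, P x * Real.log (P x / Q x)) ∧
    (∑ x, P x * Real.log (P x / Q x) = 0 ↔ P = Q) := by
  have hpt : ∀ x, (Q x - P x) ^ 2 / max (P x) (Q x) / 2 ≤
      P x * Real.log (P x / Q x) + Q x - P x :=
    fun x => pointwise (P x) (Q x) (hP x) (hQ x)
  have hq0 : ∀ x, 0 ≤ (Q x - P x) ^ 2 / max (P x) (Q x) := fun x =>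
    div_nonneg (sq_nonneg _) (le_trans (hP x).le (le_max_left _ _))
  have hsum : ∑ x, (P x * Real.log (P x / Q x) + Q x - P x)
      = ∑ x, P x * Real.log (P x / Q x) := by
    rw [Finset.sum_sub_distrib, Finset.sum_add_distrib, hPsum, hQsum]
    ring
  have h1 : ((1 : ℝ) / 2) * ∑ x, (Q x - P x) ^ 2 / max (P x) (Q x) ≤
      ∑ x, P x * Real.log (P x / Q x) := by
    rw [← hsum, Finset.mul_sum]
    apply Finset.sum_le_sum
    intro x _
    calc (1 : ℝ) / 2 * ((Q x - P x) ^ 2 / max (P x) (Q x))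
        = (Q x - P x) ^ 2 / max (P x) (Q x) / 2 := by ring
      _ ≤ _ := hpt x
  have h2 : 0 ≤ ((1 : ℝ) / 2) * ∑ x, (Q x - P x) ^ 2 / max (P x) (Q x) :=
    mul_nonneg (by norm_num) (Finset.sum_nonneg fun x _ => hq0 x)
  have h3 : 0 ≤ ∑ x, P x * Real.log (P x / Q x) := le_trans h2 h1
  refine ⟨h1, h2, h3, ?_, ?_⟩
  · intro h0
    have hS : ∑ x, (Q x - P x) ^ 2 / max (P x) (Q x) = 0 := by
      have := h1
      rw [h0] at this
      have hnn := Finset.sum_nonneg (fun x (_ : x ∈ Finset.univ) => hq0 x)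
      linarith
    have hall := (Finset.sum_eq_zero_iff_of_nonneg
      (fun x (_ : x ∈ Finset.univ) => hq0 x)).1 hS
    funext x
    have hx := hall x (Finset.mem_univ x)
    have hmax : max (P x) (Q x) ≠ 0 :=
      ne_of_gt (lt_of_lt_of_le (hP x) (le_max_left _ _))
    rw [div_eq_zero_iff] at hx
    rcases hx with hx | hx
    · have : Q x - P x = 0 := by
        have := sq_eq_zero_iff.1 hx
        exact this
      linarith
    · exact absurd hx hmax
  · intro h
    subst h
    apply Finset.sum_eq_zero
    intro x _
    rw [div_self (ne_of_gt (hP x)), Real.log_one, mul_zero]
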